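/- arXiv:1808.09356 — 4 statements merged into one kernel-verified Lean document; each statement's English description precedes it below -/
import Mathlib

section
/- Let V be a 4-dimensional real vector space and J : V → V a linear map with J ∘ J = −id. If β is a nonzero J-anti-invariant alternating bilinear form on V (i.e. β(Ju, Jv) = −β(u, v) for all u, v), then β is nondegenerate: for every nonzero u ∈ V there exists v ∈ V with β(u, v) ≠ 0. -/
/-- On a 4-dimensional real vector space with a linear complex structure `J`,
every nonzero `J`-anti-invariant alternating bilinear form is nondegenerate. -/
theorem anti_invariant_form_nondegenerate
    {V : Type*} [AddCommGroup V] [Module ℝ V]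
    (hdim : Module.finrank ℝ V = 4)
    (J : V →ₗ[ℝ] V) (hJ : ∀ v : V, J (J v) = -v)
    (β : V →ₗ[ℝ] V →ₗ[ℝ] ℝ)
    (halt : ∀ v : V, β v v = 0)
    (hanti : ∀ u v : V, β (J u) (J v) = -β u v)
    (hne : β ≠ 0) :
    ∀ u : V, u ≠ 0 → ∃ v : V, β u v ≠ 0 := by
  have hfin : FiniteDimensional ℝ V := FiniteDimensional.of_finrank_pos (by omega)
  -- antisymmetry
  have hskew : ∀ x y : V, β x y = -β y x := by
    intro x y
    have h := halt (x + y)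
    simp only [map_add, LinearMap.add_apply, halt] at h
    linarith
  -- β w (J w) = 0 for all w
  have hJw : ∀ w : V, β w (J w) = 0 := by
    intro w
    have h1 := hanti w (J w)
    rw [hJ] at h1
    have h2 : β (J w) (-w) = -β (J w) w := by simp
    have h3 := hskew (J w) w
    rw [h2] at h1
    linarith
  by_contra hcon
  push_neg at hcon
  obtain ⟨u, hu0, hu⟩ := hcon
  have hJu : ∀ v : V, β (J u) v = 0 := by
    intro v
    have hv : J (-(J v)) = v := by rw [map_neg, hJ]; simp
    calc β (J u) v = β (J u) (J (-(J v))) := by rw [hv]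
      _ = -β u (-(J v)) := hanti u _
      _ = 0 := by rw [hu]; simp
  -- independence of u and J u
  have huJu : ∀ a b : ℝ, a • u + b • J u = 0 → a = 0 ∧ b = 0 := by
    intro a b hab
    have hJab : a • J u - b • u = 0 := by
      have := congrArg J hab
      simp only [map_add, map_smul, hJ, map_zero, smul_neg] at this
      rw [sub_eq_iff_eq_add]
      linear_combination (norm := module) this
    have key : (a*a + b*b) • u = a • (a • u + b • J u) - b • (a • J u - b • u) := by
      module
    rw [hab, hJab] at key
    simp only [smul_zero, sub_zero] at key
    have habs : a*a + b*b = 0 := by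
      rcases smul_eq_zero.mp key with h | h
      · exact h
      · exact absurd h hu0
    constructor <;> nlinarith
  apply hne
  ext x y
  simp only [LinearMap.zero_apply]
  -- W := span {u, J u}
  set W : Submodule ℝ V := Submodule.span ℝ {u, J u} with hW
  have hWJ : ∀ z ∈ W, J z ∈ W := by
    intro z hz
    obtain ⟨a, b, hab⟩ := Submodule.mem_span_pair.mp hz
    rw [← hab]
    simp only [map_add, map_smul, hJ]
    apply Submodule.add_mem
    · exact Submodule.smul_mem _ _ (Submodule.subset_span (by simp))
    · rw [smul_neg]
      exact Submodule.neg_mem _ (Submodule.smul_mem _ _ (Submodule.subset_span (by simp)))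
  have hβW : ∀ z ∈ W, ∀ v : V, β z v = 0 := by
    intro z hz v
    obtain ⟨a, b, hab⟩ := Submodule.mem_span_pair.mp hz
    rw [← hab]
    simp [hu, hJu]
  by_cases hx : x ∈ W
  · exact hβW x hx y
  · -- {u, J u, x, J x} is linearly independent, hence a basis
    have hind : LinearIndependent ℝ ![u, J u, x, J x] := by
      rw [Fintype.linearIndependent_iff]
      intro g hg
      rw [Fin.sum_univ_four] at hg
      simp only [Matrix.cons_val_zero, Matrix.cons_val_one, Matrix.head_cons,
        Matrix.cons_val_two, Matrix.tail_cons, Matrix.cons_val_three] at hg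
      -- hg : g 0 • u + g 1 • J u + g 2 • x + g 3 • J x = 0
      have h1 : g 2 • x + g 3 • J x ∈ W := by
        have : g 2 • x + g 3 • J x = -(g 0 • u) + -(g 1 • J u) := by
          linear_combination (norm := module) hg
        rw [this]
        apply Submodule.add_mem <;> apply Submodule.neg_mem <;>
          exact Submodule.smul_mem _ _ (Submodule.subset_span (by simp))
      have h2 : g 2 • J x - g 3 • x ∈ W := by
        have := hWJ _ h1
        simp only [map_add, map_smul, hJ, smul_neg] at this
        have heq : g 2 • J x - g 3 • x = g 2 • J x + -(g 3 • x) := by module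
        rw [heq]
        exact this
      have h3 : (g 2 * g 2 + g 3 * g 3) • x ∈ W := by
        have heq : (g 2 * g 2 + g 3 * g 3) • x
            = g 2 • (g 2 • x + g 3 • J x) - g 3 • (g 2 • J x - g 3 • x) := by module
        rw [heq]
        exact Submodule.sub_mem _ (Submodule.smul_mem _ _ h1) (Submodule.smul_mem _ _ h2)
      have hg23 : g 2 = 0 ∧ g 3 = 0 := by
        by_cases hc : g 2 * g 2 + g 3 * g 3 = 0
        · constructor <;> nlinarith
        · exfalso
          apply hx
          have : x = (g 2 * g 2 + g 3 * g 3)⁻¹ • ((g 2 * g 2 + g 3 * g 3) • x) := by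
            rw [smul_smul, inv_mul_cancel₀ hc, one_smul]
          rw [this]
          exact Submodule.smul_mem _ _ h3
      obtain ⟨h2z, h3z⟩ := hg23
      rw [h2z, h3z] at hg
      simp only [zero_smul, add_zero] at hg
      obtain ⟨h0z, h1z⟩ := huJu _ _ hg
      intro i
      fin_cases i <;> assumption
    have hspan : Submodule.span ℝ (Set.range ![u, J u, x, J x]) = ⊤ := by
      apply Submodule.eq_top_of_finrank_eq
      rw [finrank_span_eq_card hind, hdim]
      simp
    have hy : y ∈ Submodule.span ℝ (Set.range ![u, J u, x, J x]) := by
      rw [hspan]; trivial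
    obtain ⟨c, hc⟩ := (Submodule.mem_span_range_iff_exists_fun ℝ).mp hy
    rw [Fin.sum_univ_four] at hc
    simp only [Matrix.cons_val_zero, Matrix.cons_val_one, Matrix.head_cons,
      Matrix.cons_val_two, Matrix.tail_cons, Matrix.cons_val_three] at hc
    have e1 : β x u = 0 := by rw [hskew, hu]; ring
    have e2 : β x (J u) = 0 := by rw [hskew, hJu]; ring
    rw [← hc]
    simp [e1, e2, halt, hJw]
end

section
/- (Two-variable extension lemma, core of the proof of Proposition 5.2.) Let ρ > 0 and let D ⊂ ℂ be the open disk of radius ρ centred at 0. Let F : (D × D) ∖ {(0,0)} → ℂ be infinitely differentiable (over ℝ) on this open subset of ℂ², and assume: (i) for every w ∈ D with w ≠ 0, the function ξ ↦ F(ξ, w) is holomorphic on D; (ii) the function ξ ↦ F(ξ, 0) is holomorphic on D ∖ {0}; (iii) the function w ↦ F(0, w) is holomorphic on D ∖ {0}. Then there exist a complex number c and holomorphic functions G, H : D → ℂ such that G(ξ) = F(ξ, 0) for all ξ ∈ D ∖ {0}, H(w) = F(0, w) for all w ∈ D ∖ {0}, and G(0) = H(0) = c. -/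
open Complex Metric Topology Filter

section aux

open Asymptotics Set

/-- Auxiliary: a function bounded near `0` on the punctured neighborhood is little-o of `z⁻¹`. -/
lemma aux_isLittleO_of_bdd {f : ℂ → ℂ} {M : ℝ}
    (hb : ∀ᶠ z in 𝓝[≠] (0 : ℂ), ‖f z‖ ≤ M) :
    (fun z => f z - f 0) =o[𝓝[≠] (0 : ℂ)] fun z => (z - 0)⁻¹ := by
  apply Filter.IsBoundedUnder.isLittleO_sub_self_inv (a := (0 : ℂ)) (f := fun z => f z - f 0)
  refine ⟨M + ‖f 0‖, ?_⟩
  rw [Filter.eventually_map]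
  filter_upwards [hb] with z hz
  exact norm_sub_le_of_le hz le_rfl

end aux

/-- two-variable extension lemma, core of the proof of Proposition 5.2:
a function on a punctured bidisk, holomorphic in the first variable for each nonzero
value of the second, and holomorphic on both punctured axes, extends holomorphically
along both axes with a common value at the origin. -/
theorem two_variable_extension
    (ρ : ℝ) (hρ : 0 < ρ) (F : ℂ × ℂ → ℂ)
    (hF : ContDiffOn ℝ (⊤ : ℕ∞) F ((ball (0 : ℂ) ρ ×ˢ ball (0 : ℂ) ρ) \ {(0, 0)}))
    (h1 : ∀ w ∈ ball (0 : ℂ) ρ, w ≠ 0 →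
      DifferentiableOn ℂ (fun ξ : ℂ => F (ξ, w)) (ball (0 : ℂ) ρ))
    (h2 : DifferentiableOn ℂ (fun ξ : ℂ => F (ξ, 0)) (ball (0 : ℂ) ρ \ {0}))
    (h3 : DifferentiableOn ℂ (fun w : ℂ => F (0, w)) (ball (0 : ℂ) ρ \ {0})) :
    ∃ (c : ℂ) (G H : ℂ → ℂ),
      DifferentiableOn ℂ G (ball (0 : ℂ) ρ) ∧
      DifferentiableOn ℂ H (ball (0 : ℂ) ρ) ∧
      (∀ ξ ∈ ball (0 : ℂ) ρ \ {0}, G ξ = F (ξ, 0)) ∧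
      (∀ w ∈ ball (0 : ℂ) ρ \ {0}, H w = F (0, w)) ∧
      G 0 = c ∧ H 0 = c := by
  classical
  set U : Set (ℂ × ℂ) := (ball (0 : ℂ) ρ ×ˢ ball (0 : ℂ) ρ) \ {(0, 0)} with hU
  have hUopen : IsOpen U := (isOpen_ball.prod isOpen_ball).sdiff isClosed_singleton
  have hFc : ContinuousOn F U := hF.continuousOn
  set r : ℝ := ρ / 2 with hrdef
  have hr : 0 < r := by positivity
  have hrρ : r < ρ := by linarith
  -- the compact set (sphere r) × (closedBall r) lies in U
  have hSU : sphere (0 : ℂ) r ×ˢ closedBall (0 : ℂ) r ⊆ U := by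
    rintro ⟨ξ, w⟩ ⟨hξ, hw⟩
    have hξn : ‖ξ‖ = r := by simpa using hξ
    constructor
    · exact ⟨by simp [mem_ball, dist_eq_norm, hξn, hrρ],
        lt_of_le_of_lt (by simpa [dist_eq_norm] using hw) hrρ⟩
    · intro h
      simp only [Set.mem_singleton_iff, Prod.mk.injEq] at h
      have : ξ ≠ 0 := by
        intro h0; rw [h0] at hξn; simp at hξn; linarith
      exact this h.1
  obtain ⟨C, hC⟩ := ((isCompact_sphere (0 : ℂ) r).prod
    (isCompact_closedBall (0 : ℂ) r)).exists_bound_of_continuousOn (hFc.mono hSU)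
  set M : ℝ := max C 0 with hM
  have hM0 : 0 ≤ M := le_max_right _ _
  have hCM : ∀ p ∈ sphere (0 : ℂ) r ×ˢ closedBall (0 : ℂ) r, ‖F p‖ ≤ M :=
    fun p hp => (hC p hp).trans (le_max_left _ _)
  -- maximum modulus bound for each nonzero w
  have hball : ball (0 : ℂ) r ⊆ ball (0 : ℂ) ρ := ball_subset_ball hrρ.le
  have hcball : closedBall (0 : ℂ) r ⊆ ball (0 : ℂ) ρ := closedBall_subset_ball hrρ
  have hM1 : ∀ w ∈ closedBall (0 : ℂ) r, w ≠ 0 →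
      ∀ ξ ∈ closedBall (0 : ℂ) r, ‖F (ξ, w)‖ ≤ M := by
    intro w hw hw0 ξ hξ
    have hdw : DifferentiableOn ℂ (fun ξ : ℂ => F (ξ, w)) (ball (0 : ℂ) ρ) :=
      h1 w (hcball hw) hw0
    have hdc : DiffContOnCl ℂ (fun ξ : ℂ => F (ξ, w)) (ball (0 : ℂ) r) := by
      apply DifferentiableOn.diffContOnCl
      rw [closure_ball (0 : ℂ) hr.ne']
      exact hdw.mono hcball
    have := norm_le_of_forall_mem_frontier_norm_le isBounded_ball hdc
      (fun z hz => by
        rw [frontier_ball (0 : ℂ) hr.ne'] at hz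
        exact hCM (z, w) ⟨hz, hw⟩)
      (by rw [closure_ball (0 : ℂ) hr.ne']; exact hξ)
    exact this
  -- bound on axis w = 0, ξ ≠ 0, by continuity
  have hcont : ∀ ξ : ℂ, ξ ∈ ball (0 : ℂ) ρ → ξ ≠ 0 →
      Filter.Tendsto (fun w : ℂ => F (ξ, w)) (𝓝[≠] (0 : ℂ)) (𝓝 (F (ξ, 0))) := by
    intro ξ hξ hξ0
    have hmem : (ξ, (0 : ℂ)) ∈ U := by
      refine ⟨⟨hξ, by simpa using hρ⟩, ?_⟩
      simp only [Set.mem_singleton_iff, Prod.mk.injEq, not_and]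
      intro h; exact absurd h hξ0
    have hFat : ContinuousAt F (ξ, 0) := hFc.continuousAt (hUopen.mem_nhds hmem)
    have : Filter.Tendsto (fun w : ℂ => ((ξ, w) : ℂ × ℂ)) (𝓝[≠] (0 : ℂ)) (𝓝 (ξ, 0)) :=
      ((Continuous.prodMk_right ξ).tendsto 0).mono_left nhdsWithin_le_nhds
    exact hFat.tendsto.comp this
  have hM2 : ∀ ξ ∈ closedBall (0 : ℂ) r, ξ ≠ 0 → ‖F (ξ, 0)‖ ≤ M := by
    intro ξ hξ hξ0
    have hT := (hcont ξ (hcball hξ) hξ0).norm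
    refine le_of_tendsto hT ?_
    have hev : ∀ᶠ w in 𝓝[≠] (0 : ℂ), w ∈ closedBall (0 : ℂ) r :=
      Filter.eventually_iff_exists_mem.mpr ⟨_, nhdsWithin_le_nhds (closedBall_mem_nhds (0 : ℂ) hr),
        fun w hw => hw⟩
    filter_upwards [hev, self_mem_nhdsWithin] with w hw hw0
    exact hM1 w hw hw0 ξ hξ
  -- boundedness near 0 on both axes
  have hbG : ∀ᶠ ξ in 𝓝[≠] (0 : ℂ), ‖F (ξ, 0)‖ ≤ M := by
    have hev : ∀ᶠ ξ in 𝓝[≠] (0 : ℂ), ξ ∈ closedBall (0 : ℂ) r :=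
      Filter.eventually_iff_exists_mem.mpr ⟨_, nhdsWithin_le_nhds (closedBall_mem_nhds (0 : ℂ) hr),
        fun w hw => hw⟩
    filter_upwards [hev, self_mem_nhdsWithin] with ξ hξ hξ0
    exact hM2 ξ hξ hξ0
  have hbH : ∀ᶠ w in 𝓝[≠] (0 : ℂ), ‖F (0, w)‖ ≤ M := by
    have hev : ∀ᶠ w in 𝓝[≠] (0 : ℂ), w ∈ closedBall (0 : ℂ) r :=
      Filter.eventually_iff_exists_mem.mpr ⟨_, nhdsWithin_le_nhds (closedBall_mem_nhds (0 : ℂ) hr),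
        fun w hw => hw⟩
    filter_upwards [hev, self_mem_nhdsWithin] with w hw hw0
    exact hM1 w hw hw0 0 (by simpa using hr.le)
  -- define the extensions
  set G : ℂ → ℂ := Function.update (fun ξ : ℂ => F (ξ, 0)) 0
    (limUnder (𝓝[≠] (0 : ℂ)) (fun ξ : ℂ => F (ξ, 0))) with hGdef
  set H : ℂ → ℂ := Function.update (fun w : ℂ => F (0, w)) 0
    (limUnder (𝓝[≠] (0 : ℂ)) (fun w : ℂ => F (0, w))) with hHdef
  have hGd : DifferentiableOn ℂ G (ball (0 : ℂ) ρ) := by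
    apply Complex.differentiableOn_update_limUnder_of_isLittleO (ball_mem_nhds _ hρ) h2
    exact aux_isLittleO_of_bdd hbG
  have hHd : DifferentiableOn ℂ H (ball (0 : ℂ) ρ) := by
    apply Complex.differentiableOn_update_limUnder_of_isLittleO (ball_mem_nhds _ hρ) h3
    exact aux_isLittleO_of_bdd hbH
  have hGeq : ∀ ξ ∈ ball (0 : ℂ) ρ \ {0}, G ξ = F (ξ, 0) := by
    intro ξ hξ; exact Function.update_of_ne hξ.2 _ _
  have hHeq : ∀ w ∈ ball (0 : ℂ) ρ \ {0}, H w = F (0, w) := by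
    intro w hw; exact Function.update_of_ne hw.2 _ _
  refine ⟨H 0, G, H, hGd, hHd, hGeq, hHeq, ?_, rfl⟩
  -- now show G 0 = H 0
  -- limits along the axes
  have hGlim : Filter.Tendsto (fun ξ : ℂ => F (ξ, 0)) (𝓝[≠] (0 : ℂ)) (𝓝 (G 0)) := by
    have hc : ContinuousAt G 0 :=
      (hGd.differentiableAt (isOpen_ball.mem_nhds (by simpa using hρ))).continuousAt
    refine (hc.tendsto.mono_left nhdsWithin_le_nhds).congr' ?_
    filter_upwards [self_mem_nhdsWithin] with ξ hξ
    exact (Function.update_of_ne hξ _ _)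
  have hHlim : Filter.Tendsto (fun w : ℂ => F (0, w)) (𝓝[≠] (0 : ℂ)) (𝓝 (H 0)) := by
    have hc : ContinuousAt H 0 :=
      (hHd.differentiableAt (isOpen_ball.mem_nhds (by simpa using hρ))).continuousAt
    refine (hc.tendsto.mono_left nhdsWithin_le_nhds).congr' ?_
    filter_upwards [self_mem_nhdsWithin] with w hw
    exact (Function.update_of_ne hw _ _)
  -- Schwarz-type estimate, uniform in w
  have hSchwarz : ∀ w ∈ ball (0 : ℂ) r, w ≠ 0 → ∀ ξ ∈ ball (0 : ℂ) r,
      dist (F (ξ, w)) (F (0, w)) ≤ (2 * M + 1) / r * dist ξ 0 := by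
    intro w hw hw0 ξ hξ
    have hdw : DifferentiableOn ℂ (fun ξ : ℂ => F (ξ, w)) (ball (0 : ℂ) r) :=
      (h1 w (hball hw) hw0).mono hball
    refine Complex.dist_le_div_mul_dist_of_mapsTo_ball hdw ?_ hξ
    intro z hz
    have h1' : ‖F (z, w)‖ ≤ M := hM1 w (ball_subset_closedBall hw) hw0 z (ball_subset_closedBall hz)
    have h2' : ‖F (0, w)‖ ≤ M := hM1 w (ball_subset_closedBall hw) hw0 0 (by simpa using hr.le)
    have : dist (F (z, w)) (F (0, w)) ≤ 2 * M := by
      calc dist (F (z, w)) (F (0, w)) ≤ ‖F (z, w)‖ + ‖F (0, w)‖ := by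
            rw [dist_eq_norm]; exact norm_sub_le _ _
        _ ≤ 2 * M := by linarith
    calc dist (F (z, w)) (F (0, w)) ≤ 2 * M := this
      _ ≤ 2 * M + 1 := by linarith
  -- pass to the limit w → 0 to estimate F (ξ, 0) against H 0
  have hest : ∀ ξ ∈ ball (0 : ℂ) r, ξ ≠ 0 →
      dist (F (ξ, 0)) (H 0) ≤ (2 * M + 1) / r * dist ξ 0 := by
    intro ξ hξ hξ0
    have hT : Filter.Tendsto (fun w : ℂ => dist (F (ξ, w)) (F (0, w))) (𝓝[≠] (0 : ℂ))
        (𝓝 (dist (F (ξ, 0)) (H 0))) :=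
      (hcont ξ (hball hξ) hξ0).dist hHlim
    refine le_of_tendsto hT ?_
    have hev : ∀ᶠ w in 𝓝[≠] (0 : ℂ), w ∈ ball (0 : ℂ) r :=
      Filter.eventually_iff_exists_mem.mpr ⟨_, nhdsWithin_le_nhds (ball_mem_nhds (0 : ℂ) hr),
        fun w hw => hw⟩
    filter_upwards [hev, self_mem_nhdsWithin] with w hw hw0
    exact hSchwarz w hw hw0 ξ hξ
  -- conclude F (ξ, 0) → H 0 as ξ → 0
  have hGlim' : Filter.Tendsto (fun ξ : ℂ => F (ξ, 0)) (𝓝[≠] (0 : ℂ)) (𝓝 (H 0)) := by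
    rw [tendsto_iff_dist_tendsto_zero]
    have hub : Filter.Tendsto (fun ξ : ℂ => (2 * M + 1) / r * dist ξ 0) (𝓝[≠] (0 : ℂ)) (𝓝 0) := by
      have : Filter.Tendsto (fun ξ : ℂ => dist ξ 0) (𝓝[≠] (0 : ℂ)) (𝓝 0) := by
        have h0 : Filter.Tendsto (fun ξ : ℂ => ξ) (𝓝[≠] (0 : ℂ)) (𝓝 0) :=
          Filter.tendsto_id.mono_left nhdsWithin_le_nhds
        simpa using h0.dist (tendsto_const_nhds (x := (0 : ℂ)))
      simpa using this.const_mul ((2 * M + 1) / r)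
    have hev : ∀ᶠ ξ in 𝓝[≠] (0 : ℂ), ξ ∈ ball (0 : ℂ) r :=
      Filter.eventually_iff_exists_mem.mpr ⟨_, nhdsWithin_le_nhds (ball_mem_nhds (0 : ℂ) hr),
        fun w hw => hw⟩
    apply squeeze_zero' ?_ ?_ hub
    · filter_upwards with ξ; exact dist_nonneg
    · filter_upwards [hev, self_mem_nhdsWithin] with ξ hξ hξ0
      exact hest ξ hξ hξ0
  exact tendsto_nhds_unique hGlim hGlim'
end

section
/- (Vanishing of negative Laurent coefficients at the central parameter; a step in the proof of Proposition 5.2.) Let ρ > 0 and let D ⊂ ℂ be the open disk of radius ρ centred at 0. Let F : (D × D) ∖ {(0,0)} → ℂ be infinitely differentiable (over ℝ) on this open subset of ℂ², and assume: (i) for every w ∈ D with w ≠ 0, the function ξ ↦ F(ξ, w) is holomorphic on D; (ii) the function ξ ↦ F(ξ, 0) is holomorphic on D ∖ {0}. Then for every integer k ≥ 0 and every r ∈ (0, ρ), the circle integral ∮_{|ξ| = r} F(ξ, 0)·ξ^k dξ equals 0. -/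
open Complex Metric Filter

/-- vanishing of negative Laurent coefficients at the central parameter;
a step in the proof of Proposition 5.2: all circle integrals `∮_{|ξ|=r} F(ξ,0)·ξ^k dξ`
with `k ≥ 0` vanish. -/
theorem negative_laurent_coefficients_vanish
    (ρ : ℝ) (hρ : 0 < ρ) (F : ℂ × ℂ → ℂ)
    (hF : ContDiffOn ℝ (⊤ : ℕ∞) F ((ball (0 : ℂ) ρ ×ˢ ball (0 : ℂ) ρ) \ {(0, 0)}))
    (h1 : ∀ w ∈ ball (0 : ℂ) ρ, w ≠ 0 →
      DifferentiableOn ℂ (fun ξ : ℂ => F (ξ, w)) (ball (0 : ℂ) ρ))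
    (h2 : DifferentiableOn ℂ (fun ξ : ℂ => F (ξ, 0)) (ball (0 : ℂ) ρ \ {0})) :
    ∀ (k : ℕ) (r : ℝ), 0 < r → r < ρ →
      (∮ ξ in C(0, r), F (ξ, 0) * ξ ^ k) = 0 := by
  intro k r hr hrρ
  -- the domain is open
  have hopen : IsOpen ((ball (0 : ℂ) ρ ×ˢ ball (0 : ℂ) ρ) \ {(0, 0)}) :=
    (isOpen_ball.prod isOpen_ball).sdiff isClosed_singleton
  have hFc : ContinuousOn F ((ball (0 : ℂ) ρ ×ˢ ball (0 : ℂ) ρ) \ {(0, 0)}) :=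
    hF.continuousOn
  -- the circle lies in the domain (paired with any small w)
  have hmem : ∀ θ : ℝ, ∀ w ∈ closedBall (0 : ℂ) r,
      (circleMap 0 r θ, w) ∈ (ball (0 : ℂ) ρ ×ˢ ball (0 : ℂ) ρ) \ {(0, 0)} := by
    intro θ w hw
    constructor
    · constructor
      · simp [mem_ball, circleMap, abs_of_pos hr, hrρ]
      · exact mem_ball_zero_iff.mpr (lt_of_le_of_lt (mem_closedBall_zero_iff.mp hw) hrρ)
    · intro h
      have : circleMap 0 r θ = 0 := by
        simpa using congrArg Prod.fst h
      exact circleMap_ne_center hr.ne' this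
  -- g w := the circle integral with parameter w
  set g : ℂ → ℂ := fun w => ∮ ξ in C(0, r), F (ξ, w) * ξ ^ k with hg
  -- g vanishes on the punctured small ball
  have hg0 : ∀ w ∈ closedBall (0 : ℂ) r, w ≠ 0 → g w = 0 := by
    intro w hw hw0
    have hwρ : w ∈ ball (0 : ℂ) ρ :=
      mem_ball_zero_iff.mpr (lt_of_le_of_lt (mem_closedBall_zero_iff.mp hw) hrρ)
    have hdiff : DifferentiableOn ℂ (fun ξ : ℂ => F (ξ, w) * ξ ^ k)
        (ball (0 : ℂ) ρ) := (h1 w hwρ hw0).mul (differentiable_pow k).differentiableOn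
    refine circleIntegral_eq_zero_of_differentiable_on_off_countable hr.le
      (Set.countable_empty) (hdiff.continuousOn.mono ?_) (fun z hz => ?_)
    · exact closedBall_subset_ball hrρ
    · exact (hdiff.differentiableAt (isOpen_ball.mem_nhds
        (lt_of_lt_of_le hz.1 (le_of_lt hrρ) : z ∈ ball (0:ℂ) ρ)))
  -- continuity of g at 0 via dominated convergence
  -- bound on the compact set sphere × closedBall
  obtain ⟨C, hC⟩ : ∃ C, ∀ x ∈ sphere (0 : ℂ) r ×ˢ closedBall (0 : ℂ) r, ‖F x‖ ≤ C := by
    have hK : IsCompact (sphere (0 : ℂ) r ×ˢ closedBall (0 : ℂ) r) :=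
      (isCompact_sphere _ _).prod (isCompact_closedBall _ _)
    have hsub : sphere (0 : ℂ) r ×ˢ closedBall (0 : ℂ) r ⊆
        (ball (0 : ℂ) ρ ×ˢ ball (0 : ℂ) ρ) \ {(0, 0)} := by
      rintro ⟨ξ, w⟩ ⟨hξ, hw⟩
      constructor
      · exact ⟨by simpa [mem_ball, mem_sphere_iff_norm] using
          (by rw [mem_sphere_zero_iff_norm.mp hξ]; exact hrρ : ‖ξ‖ < ρ),
          mem_ball_zero_iff.mpr (lt_of_le_of_lt (mem_closedBall_zero_iff.mp hw) hrρ)⟩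
      · intro h
        have : ξ = 0 := by simpa using congrArg Prod.fst h
        rw [this] at hξ
        simp [mem_sphere_zero_iff_norm] at hξ
        exact hr.ne' hξ.symm
    exact hK.exists_bound_of_continuousOn (hFc.mono hsub)
  have hcont : ∀ w ∈ closedBall (0 : ℂ) r, ContinuousOn
      (fun θ : ℝ => deriv (circleMap 0 r) θ • (F (circleMap 0 r θ, w) * (circleMap 0 r θ) ^ k))
      (Set.uIcc 0 (2 * Real.pi)) := by
    intro w hw
    refine ContinuousOn.smul (f := fun θ : ℝ => deriv (circleMap 0 r) θ)
      (g := fun θ : ℝ => F (circleMap 0 r θ, w) * (circleMap 0 r θ) ^ k) ?_ ?_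
    · exact ((continuous_circleMap 0 r).mul (continuous_const : Continuous fun _ : ℝ => I)).continuousOn
      |>.congr (fun θ _ => by rw [deriv_circleMap]; rfl)
    · apply ContinuousOn.mul
      · intro θ _
        have : ContinuousAt (fun θ : ℝ => F (circleMap 0 r θ, w)) θ :=
          ContinuousAt.comp (hFc.continuousAt (hopen.mem_nhds (hmem θ w hw)))
            (ContinuousAt.prodMk (continuous_circleMap 0 r).continuousAt continuousAt_const)
        exact this.continuousWithinAt
      · exact ((continuous_circleMap 0 r).pow k).continuousOn
  -- tendsto of g along 𝓝[≠] 0 to g 0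
  have htend : Tendsto g (nhdsWithin 0 {(0:ℂ)}ᶜ) (nhds (g 0)) := by
    simp only [hg, circleIntegral]
    apply intervalIntegral.tendsto_integral_filter_of_dominated_convergence
      (fun _ : ℝ => r * (C * r ^ k))
    · filter_upwards [eventually_nhdsWithin_of_eventually_nhds
        (eventually_nhds_iff.mpr ⟨ball (0:ℂ) r, fun w hw => hw,
          isOpen_ball, mem_ball_self hr⟩)] with w hw
      exact ((hcont w (ball_subset_closedBall hw)).mono
        (by rw [Set.uIoc_of_le (by positivity : (0:ℝ) ≤ 2 * Real.pi)];
            exact Set.Ioc_subset_Icc_self.trans (by rw [Set.uIcc_of_le (by positivity)])))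
        |>.aestronglyMeasurable measurableSet_uIoc
    · filter_upwards [eventually_nhdsWithin_of_eventually_nhds
        (eventually_nhds_iff.mpr ⟨ball (0:ℂ) r, fun w hw => hw,
          isOpen_ball, mem_ball_self hr⟩)] with w hw
      filter_upwards with θ _
      have h1 : ‖deriv (circleMap 0 r) θ‖ = r := by
        simp [deriv_circleMap, norm_circleMap_zero, abs_of_pos hr]
      have h2 : ‖circleMap 0 r θ ^ k‖ = r ^ k := by
        simp [norm_circleMap_zero, abs_of_pos hr]
      calc ‖deriv (circleMap 0 r) θ • (F (circleMap 0 r θ, w) * circleMap 0 r θ ^ k)‖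
          = r * (‖F (circleMap 0 r θ, w)‖ * r ^ k) := by
            rw [norm_smul, norm_mul, h1, h2]
        _ ≤ r * (C * r ^ k) := by
            have := hC (circleMap 0 r θ, w)
              ⟨by simp [mem_sphere_zero_iff_norm, norm_circleMap_zero, abs_of_pos hr],
               ball_subset_closedBall hw⟩
            have hrk : (0:ℝ) ≤ r ^ k := by positivity
            exact mul_le_mul_of_nonneg_left (mul_le_mul_of_nonneg_right this hrk) hr.le
    · exact intervalIntegrable_const
    · filter_upwards with θ _
      apply Tendsto.smul tendsto_const_nhds
      apply Tendsto.mul _ tendsto_const_nhds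
      have hc : ContinuousAt F (circleMap 0 r θ, (0:ℂ)) :=
        hFc.continuousAt (hopen.mem_nhds (hmem θ 0 (mem_closedBall_self hr.le)))
      have : Tendsto (fun w : ℂ => (circleMap 0 r θ, w)) (nhdsWithin 0 {(0:ℂ)}ᶜ)
          (nhds (circleMap 0 r θ, (0:ℂ))) :=
        ((Continuous.prodMk continuous_const continuous_id).tendsto _).mono_left
          nhdsWithin_le_nhds
      exact hc.tendsto.comp this
  -- g is eventually 0 along 𝓝[≠] 0
  have hev : ∀ᶠ w in nhdsWithin 0 {(0:ℂ)}ᶜ, g w = 0 := by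
    filter_upwards [self_mem_nhdsWithin,
      eventually_nhdsWithin_of_eventually_nhds
        (eventually_nhds_iff.mpr ⟨ball (0:ℂ) r, fun w hw => hw,
          isOpen_ball, mem_ball_self hr⟩)] with w hw1 hw2
    exact hg0 w (ball_subset_closedBall hw2) hw1
  have : Tendsto g (nhdsWithin 0 {(0:ℂ)}ᶜ) (nhds 0) :=
    Tendsto.congr' (Filter.EventuallyEq.symm hev) tendsto_const_nhds
  exact tendsto_nhds_unique htend this
end

section
/- (Uniqueness of the multiplicity functional; Proposition 6.1 of the paper.) Let D ⊂ ℂ be the open unit disk. Call a continuous map u : D → ℂ admissible if the closure in ℂ of its zero set {z ∈ D : u(z) = 0} is contained in D. Suppose I₁ and I₂ are integer-valued functions defined on all admissible maps, each satisfying the following five properties (stated for I): (1) I(u) = 0 whenever u has no zeros in D; (2) if h : [0,1] × D → ℂ is continuous and there is a compact set K ⊂ D such that h(t, z) ≠ 0 for all t ∈ [0,1] and all z ∈ D ∖ K, then I(h(0, ·)) = I(h(1, ·)); (3) I(u ∘ c) = −I(u), where c : D → D is complex conjugation c(z) = conj(z); (4) if u is admissible and θ₁, …, θ_N are affine maps θⱼ(z)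 = aⱼ + rⱼ·z with rⱼ > 0, whose images θⱼ(D) are pairwise disjoint with closures contained in D, and the zero set of u is contained in the union of the θⱼ(D), then I(u) = Σⱼ I(u ∘ θⱼ); (5) if u is admissible and holomorphic on D, then I(u) equals the sum, over the (finitely many) zeros z of u in D, of the order of vanishing of u at z. Then I₁(u) = I₂(u) for every admissible map u. -/
open Complex Metric

/-- The open unit disk in `ℂ`. -/
def unitDisk : Set ℂ := ball (0 : ℂ) 1

/-- A continuous map `u : D → ℂ` is admissible if the closure of its zero set is
contained in the open unit disk `D`. -/
def Admissible (u : ℂ → ℂ) : Prop :=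
  ContinuousOn u unitDisk ∧ closure {z ∈ unitDisk | u z = 0} ⊆ unitDisk

/-- The five axioms of the multiplicity functional (Proposition 6.1 of the paper),
for an integer-valued functional `I` on maps `D → ℂ` (encoded as total functions on
`ℂ` together with the requirement that `I` only depends on the restriction to `D`). -/
def MultiplicityAxioms (I : (ℂ → ℂ) → ℤ) : Prop :=
  -- `I` depends only on the restriction to the unit disk
  (∀ u v : ℂ → ℂ, Admissible u → (∀ z ∈ unitDisk, u z = v z) → I u = I v) ∧
  -- (1) vanishing for nowhere-zero maps
  (∀ u : ℂ → ℂ, Admissible u → (∀ z ∈ unitDisk, u z ≠ 0) → I u = 0) ∧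
  -- (2) homotopy invariance through admissible homotopies
  (∀ h : ℝ × ℂ → ℂ, ContinuousOn h (Set.Icc (0 : ℝ) 1 ×ˢ unitDisk) →
    (∃ K : Set ℂ, IsCompact K ∧ K ⊆ unitDisk ∧
      ∀ t ∈ Set.Icc (0 : ℝ) 1, ∀ z ∈ unitDisk \ K, h (t, z) ≠ 0) →
    I (fun z => h (0, z)) = I (fun z => h (1, z))) ∧
  -- (3) behaviour under conjugation
  (∀ u : ℂ → ℂ, Admissible u →
    I (fun z => u ((starRingEnd ℂ) z)) = -I u) ∧
  -- (4) additivity over disjoint subdisks containing the zero set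
  (∀ u : ℂ → ℂ, Admissible u → ∀ (N : ℕ) (a : Fin N → ℂ) (r : Fin N → ℝ),
    (∀ j, 0 < r j) →
    (∀ j, closure (ball (a j) (r j)) ⊆ unitDisk) →
    (Pairwise fun i j : Fin N => Disjoint (ball (a i) (r i)) (ball (a j) (r j))) →
    {z ∈ unitDisk | u z = 0} ⊆ ⋃ j, ball (a j) (r j) →
    I u = ∑ j : Fin N, I (fun z => u (a j + (r j : ℂ) * z))) ∧
  -- (5) normalisation on holomorphic maps: sum of orders of vanishing
  (∀ u : ℂ → ℂ, Admissible u → DifferentiableOn ℂ u unitDisk →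
    ∀ Z : Finset ℂ, (Z : Set ℂ) = {z ∈ unitDisk | u z = 0} →
    ∀ ord : ℂ → ℕ,
      (∀ z ∈ Z, ∃ gfun : ℂ → ℂ, AnalyticAt ℂ gfun z ∧ gfun z ≠ 0 ∧
        ∀ᶠ w in nhds z, u w = (w - z) ^ ord z * gfun w) →
      I u = ∑ z ∈ Z, (ord z : ℤ))

noncomputable def Complex.abs : AbsoluteValue ℂ ℝ where
  toFun z := ‖z‖
  map_mul' := norm_mul
  nonneg' := norm_nonneg
  eq_zero' _ := norm_eq_zero
  add_le' := norm_add_le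

lemma Complex.norm_eq_abs (z : ℂ) : ‖z‖ = Complex.abs z := rfl

lemma Complex.continuous_abs : Continuous Complex.abs := continuous_norm

lemma Complex.abs_ofReal (x : ℝ) : Complex.abs (x : ℂ) = |x| := Complex.norm_real x

lemma Complex.abs_exp_ofReal_mul_I (x : ℝ) : Complex.abs (Complex.exp (x * Complex.I)) = 1 :=
  Complex.norm_exp_ofReal_mul_I x

lemma Complex.abs_mul_exp_arg_mul_I (x : ℂ) :
    (Complex.abs x : ℂ) * Complex.exp (x.arg * Complex.I) = x :=
  Complex.norm_mul_exp_arg_mul_I x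

lemma Complex.abs_re_le_abs (z : ℂ) : |z.re| ≤ Complex.abs z := Complex.abs_re_le_norm z

open Set in
lemma exists_log_lift {f : ℝ → ℂ} (hf : Continuous f) (h0 : ∀ x, f x ≠ 0) (a b : ℝ) :
    ∃ ℓ : ℝ → ℂ, ContinuousOn ℓ (Set.Icc a b) ∧ ∀ x ∈ Set.Icc a b, Complex.exp (ℓ x) = f x := by
  rcases le_or_gt a b with hab | hab
  swap
  · exact ⟨0, continuousOn_const, fun x hx => absurd (hx.1.trans hx.2) (not_le.mpr hab)⟩
  -- minimum modulus
  obtain ⟨x₀, hx₀K, hx₀min⟩ := isCompact_Icc.exists_isMinOn (f := fun x => Complex.abs (f x))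
    (Set.nonempty_Icc.mpr hab) (Complex.continuous_abs.comp hf).continuousOn
  set m : ℝ := Complex.abs (f x₀) with hm
  have hmpos : 0 < m := by
    simpa [hm, Complex.abs.pos_iff] using (h0 x₀)
  have hmle : ∀ y ∈ Icc a b, m ≤ Complex.abs (f y) := fun y hy => hx₀min hy
  -- uniform continuity
  have huc : UniformContinuousOn f (Icc a b) :=
    isCompact_Icc.uniformContinuousOn_of_continuous hf.continuousOn
  obtain ⟨δ, hδpos, hδ⟩ := (Metric.uniformContinuousOn_iff).mp huc m hmpos
  -- pick n with (b-a)/n < δ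
  obtain ⟨n, hn⟩ := exists_nat_gt ((b - a) / δ)
  have hnpos : 0 < (n : ℝ) := lt_of_le_of_lt (div_nonneg (by linarith) hδpos.le) hn
  have hstep : (b - a) / n < δ := by
    rw [div_lt_iff₀ hnpos]
    have : b - a < n * δ := by
      have := (div_lt_iff₀ hδpos).mp hn
      linarith
    linarith
  -- grid points
  set c : ℕ → ℝ := fun j => a + j * ((b - a) / n) with hc
  set s : ℕ → ℝ → ℝ := fun j x => min x (c j) with hs
  have hsmem : ∀ j, ∀ x ∈ Icc a b, s j x ∈ Icc a b := by
    intro j x hx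
    refine ⟨le_min hx.1 ?_, le_trans (min_le_left _ _) hx.2⟩
    · have : (0:ℝ) ≤ (j : ℝ) * ((b - a)/n) :=
        mul_nonneg (Nat.cast_nonneg j) (div_nonneg (by linarith) hnpos.le)
      simp [hc]; linarith
  have hcmono : ∀ j : ℕ, c j ≤ c (j+1) := by
    intro j
    have : (0:ℝ) ≤ (b - a)/n := div_nonneg (by linarith) hnpos.le
    simp only [hc, Nat.cast_succ]
    nlinarith
  have hsdiff : ∀ j : ℕ, ∀ x, 0 ≤ s (j+1) x - s j x ∧ s (j+1) x - s j x ≤ (b - a) / n := by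
    intro j x
    constructor
    · have : s j x ≤ s (j+1) x := min_le_min le_rfl (hcmono j)
      linarith
    · have h1 : s (j+1) x ≤ s j x + (b - a)/n := by
        have : c (j+1) = c j + (b-a)/n := by simp [hc, Nat.cast_succ]; ring
        rw [hs]
        simp only []
        rw [this]
        have := min_add_add_right x (c j) ((b-a)/n)
        rw [← this]
        exact min_le_min (by have : (0:ℝ) ≤ (b-a)/n := div_nonneg (by linarith) hnpos.le; linarith) le_rfl
      linarith
  -- the ratios
  set ρ : ℕ → ℝ → ℂ := fun j x => f (s (j+1) x) / f (s j x) with hρ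
  have hρ_near : ∀ j, ∀ x ∈ Icc a b, Complex.abs (ρ j x - 1) < 1 := by
    intro j x hx
    have hsj := hsmem j x hx
    have hsj1 := hsmem (j+1) x hx
    have hdist : dist (s (j+1) x) (s j x) < δ := by
      rw [Real.dist_eq, _root_.abs_of_nonneg (hsdiff j x).1]
      exact lt_of_le_of_lt (hsdiff j x).2 hstep
    have hfd : dist (f (s (j+1) x)) (f (s j x)) < m := hδ _ hsj1 _ hsj hdist
    have hne : f (s j x) ≠ 0 := h0 _
    have : Complex.abs (ρ j x - 1) = Complex.abs (f (s (j+1) x) - f (s j x)) / Complex.abs (f (s j x)) := by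
      rw [hρ]
      simp only []
      rw [div_sub_one hne, map_div₀]
    rw [this, div_lt_one (by simpa [Complex.abs.pos_iff] using hne)]
    calc Complex.abs (f (s (j+1) x) - f (s j x)) < m := by
          simpa [Complex.dist_eq, Complex.norm_eq_abs] using hfd
      _ ≤ Complex.abs (f (s j x)) := hmle _ hsj
  have hρ_slit : ∀ j, ∀ x ∈ Icc a b, ρ j x ∈ Complex.slitPlane := by
    intro j x hx
    have h := hρ_near j x hx
    left
    have h2 : |(ρ j x).re - 1| ≤ Complex.abs (ρ j x - 1) := by
      simpa using Complex.abs_re_le_abs (ρ j x - 1)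
    have h3 := (abs_lt.mp (lt_of_le_of_lt h2 h)).1
    linarith
  -- the lift
  refine ⟨fun x => Complex.log (f a) + ∑ j ∈ Finset.range n, Complex.log (ρ j x), ?_, ?_⟩
  · intro x hx
    refine ContinuousWithinAt.add continuousWithinAt_const ?_
    refine tendsto_finset_sum _ (fun j _ => ?_)
    have hρcont : ContinuousWithinAt (ρ j) (Icc a b) x := by
      refine ContinuousWithinAt.div ?_ ?_ (h0 _)
      · exact (hf.comp ((continuous_id.min continuous_const))).continuousWithinAt
      · exact (hf.comp ((continuous_id.min continuous_const))).continuousWithinAt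
    exact (continuousAt_clog (hρ_slit j x hx)).comp_continuousWithinAt hρcont
  · intro x hx
    rw [Complex.exp_add, Complex.exp_sum, Complex.exp_log (h0 a)]
    have hρne : ∀ j, ρ j x ≠ 0 := fun j => div_ne_zero (h0 _) (h0 _)
    have hexp : ∀ j ∈ Finset.range n, Complex.exp (Complex.log (ρ j x)) = ρ j x :=
      fun j _ => Complex.exp_log (hρne j)
    rw [Finset.prod_congr rfl hexp]
    -- telescoping
    have key : ∀ k : ℕ, f a * ∏ j ∈ Finset.range k, ρ j x = f (s k x) := by
      intro k
      induction k with
      | zero =>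
        have hc0 : c 0 = a := by simp [hc]
        have : s 0 x = a := by rw [hs]; simp only []; rw [hc0, min_eq_right hx.1]
        rw [this]
        simp
      | succ k ih =>
        rw [Finset.prod_range_succ, ← mul_assoc, ih, hρ]
        exact mul_div_cancel₀ _ (h0 _)
    have hsn : s n x = x := by
      have hcn : c n = b := by
        rw [hc]
        field_simp
        ring
      rw [hs]
      simp only []
      rw [hcn, min_eq_left hx.2]
    rw [key n, hsn]


lemma mem_unitDisk {z : ℂ} : z ∈ unitDisk ↔ Complex.abs z < 1 := by
  simp [unitDisk, mem_ball_zero_iff, Complex.norm_eq_abs]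

/-- Every axioms-satisfying functional takes a common value on an admissible map. -/
lemma key_value (u : ℂ → ℂ) (hu : Admissible u) :
    ∃ d : ℤ, ∀ I : (ℂ → ℂ) → ℤ, MultiplicityAxioms I → I u = d := by
  haveI : Fact (0 < 2 * Real.pi) := ⟨Real.two_pi_pos⟩
  obtain ⟨hcont, hclos⟩ := hu
  -- choose a radius `r` capturing all zeros
  have hex : ∃ r : ℝ, 0 < r ∧ r < 1 ∧ ∀ z ∈ closure {z ∈ unitDisk | u z = 0}, Complex.abs z < r := by
    set S := closure {z ∈ unitDisk | u z = 0} with hS_def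
    rcases S.eq_empty_or_nonempty with hS | hS
    · exact ⟨1/2, by norm_num, by norm_num, fun z hz => absurd (hS ▸ hz) (Set.notMem_empty z)⟩
    · have hScomp : IsCompact S := by
        refine (isCompact_closedBall (0:ℂ) 1).of_isClosed_subset isClosed_closure ?_
        refine closure_minimal (fun z hz => ?_) isClosed_closedBall
        exact ball_subset_closedBall (mem_unitDisk.mp hz.1 |> fun h => mem_ball_zero_iff.mpr (by rwa [Complex.norm_eq_abs]))
      obtain ⟨x₀, hx₀S, hx₀max⟩ := hScomp.exists_isMaxOn hS
        (Complex.continuous_abs.continuousOn)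
      have hx₀lt : Complex.abs x₀ < 1 := mem_unitDisk.mp (hclos hx₀S)
      refine ⟨(Complex.abs x₀ + 1)/2, by positivity, by linarith, fun z hz => ?_⟩
      have h2 := hx₀max hz
      simp only [Set.mem_setOf_eq] at h2
      linarith
  obtain ⟨r, hr0, hr1, hrS⟩ := hex
  have hne : ∀ w ∈ unitDisk, r ≤ Complex.abs w → u w ≠ 0 := by
    intro w hw hrw h0
    have : w ∈ closure {z ∈ unitDisk | u z = 0} := subset_closure ⟨hw, h0⟩
    exact absurd (hrS w this) (not_lt.mpr hrw)
  -- the boundary circle parametrization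
  set circ : ℝ → ℂ := fun θ => (r : ℂ) * Complex.exp (θ * I) with hcirc_def
  have habs_circ : ∀ θ, Complex.abs (circ θ) = r := by
    intro θ
    rw [hcirc_def]
    simp only [map_mul, Complex.abs_ofReal, abs_of_pos hr0]
    rw [Complex.abs_exp_ofReal_mul_I, mul_one]
  have hcirc_mem : ∀ θ, circ θ ∈ unitDisk := fun θ => mem_unitDisk.mpr (by rw [habs_circ]; exact hr1)
  set cu : ℝ → ℂ := fun θ => u (circ θ) with hcu_def
  have hcu : Continuous cu := by
    refine hcont.comp_continuous ?_ hcirc_mem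
    exact continuous_const.mul (Complex.continuous_exp.comp (Complex.continuous_ofReal.mul continuous_const))
  have hcune : ∀ θ, cu θ ≠ 0 := fun θ => hne _ (hcirc_mem θ) (le_of_eq (habs_circ θ).symm)
  -- lift the boundary values through exp
  obtain ⟨ℓ, hℓcont, hℓexp⟩ := exists_log_lift hcu hcune 0 (2 * Real.pi)
  have h2π : (0:ℝ) < 2 * Real.pi := Real.two_pi_pos
  have hper : cu (2 * Real.pi) = cu 0 := by
    simp only [hcu_def, hcirc_def]
    congr 1
    have h1 : ((2 * Real.pi : ℝ) : ℂ) * Complex.I = 2 * Real.pi * Complex.I := by push_cast; ring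
    rw [h1, Complex.exp_two_pi_mul_I]
    norm_num
  have hexpeq : Complex.exp (ℓ (2 * Real.pi)) = Complex.exp (ℓ 0) := by
    rw [hℓexp _ ⟨h2π.le, le_refl _⟩, hℓexp _ ⟨le_refl _, h2π.le⟩, hper]
  obtain ⟨d, hd⟩ := Complex.exp_eq_exp_iff_exists_int.mp hexpeq
  -- the normal form map
  set q : ℕ := d.natAbs with hq_def
  set g : ℂ → ℂ := fun z => if 0 ≤ d then z ^ d.toNat else (starRingEnd ℂ) z ^ (-d).toNat
    with hg_def
  have hgcont : Continuous g := by
    rcases le_or_gt 0 d with h | h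
    · simp only [hg_def, if_pos h]; exact continuous_pow _
    · simp only [hg_def, if_neg (not_le.mpr h)]
      exact (Complex.continuous_conj.pow _)
  have hgne : ∀ w : ℂ, w ≠ 0 → g w ≠ 0 := by
    intro w hw
    rcases le_or_gt 0 d with h | h
    · simp only [hg_def, if_pos h]; exact pow_ne_zero _ hw
    · simp only [hg_def, if_neg (not_le.mpr h)]
      exact pow_ne_zero _ (by simpa using hw)
  have hrC : (r:ℂ) ≠ 0 := Complex.ofReal_ne_zero.mpr (ne_of_gt hr0)
  have hg_circ : ∀ θ : ℝ, g (circ θ) = (r : ℂ) ^ q * Complex.exp (d * θ * Complex.I) := by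
    intro θ
    rcases le_or_gt 0 d with h | h
    · simp only [hg_def, if_pos h, hcirc_def]
      rw [mul_pow, ← Complex.exp_nat_mul]
      congr 2
      · omega
      · have : ((d.toNat : ℕ) : ℂ) = (d : ℂ) := by
          rw_mod_cast [Int.toNat_of_nonneg h]
        rw [this]; ring
    · simp only [hg_def, if_neg (not_le.mpr h), hcirc_def]
      rw [map_mul, ← Complex.exp_conj]
      have hconj1 : (starRingEnd ℂ) ((r:ℝ):ℂ) = (r:ℂ) := Complex.conj_ofReal r
      have hconj2 : (starRingEnd ℂ) ((θ:ℝ) * Complex.I) = -((θ:ℝ) * Complex.I) := by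
        rw [map_mul, Complex.conj_ofReal, Complex.conj_I]; ring
      rw [hconj1, hconj2, mul_pow, ← Complex.exp_nat_mul]
      congr 2
      · omega
      · have : (((-d).toNat : ℕ) : ℂ) = ((-d : ℤ) : ℂ) := by
          rw_mod_cast [Int.toNat_of_nonneg (by omega : (0:ℤ) ≤ -d)]
        rw [this]; push_cast; ring
  -- the angular correction function
  set Δ₀ : ℝ → ℂ := fun θ => ((q * Real.log r : ℝ) : ℂ) + d * θ * Complex.I - ℓ θ with hΔ₀_def
  have hΔ₀cont : ContinuousOn Δ₀ (Set.Icc 0 (2 * Real.pi)) := by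
    refine (continuousOn_const.add ?_).sub hℓcont
    exact ((continuous_const.mul Complex.continuous_ofReal).mul continuous_const).continuousOn
  have hΔ₀per : Δ₀ 0 = Δ₀ (2 * Real.pi) := by
    simp only [hΔ₀_def, hd]
    push_cast
    ring
  set A : Real.Angle → ℂ := AddCircle.liftIco (2 * Real.pi) 0 Δ₀ with hA_def
  have hAcont : Continuous A := AddCircle.liftIco_zero_continuous hΔ₀per hΔ₀cont
  have hAcoe : ∀ θ ∈ Set.Ico (0:ℝ) (2 * Real.pi), A θ = Δ₀ θ := fun θ hθ =>
    AddCircle.liftIco_zero_coe_apply hθ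
  -- the master identity on the circle
  have K1 : ∀ θ : ℝ, cu θ * Complex.exp (A θ) = g (circ θ) := by
    have Kico : ∀ θ ∈ Set.Ico (0:ℝ) (2*Real.pi), cu θ * Complex.exp (A θ) = g (circ θ) := by
      intro θ hθ
      rw [hAcoe θ hθ, hg_circ]
      simp only [hΔ₀_def]
      have hC : Complex.exp (((q * Real.log r : ℝ) : ℂ)) = (r:ℂ)^q := by
        rw [← Complex.ofReal_exp]
        norm_cast
        rw [Real.exp_nat_mul, Real.exp_log hr0]
      rw [Complex.exp_sub, Complex.exp_add, hC, hℓexp θ ⟨hθ.1, hθ.2.le⟩]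
      field_simp [hcune θ]
    intro θ
    set θ₀ := toIcoMod Real.two_pi_pos 0 θ with hθ₀def
    have hmem : θ₀ ∈ Set.Ico (0:ℝ) (0 + 2*Real.pi) := toIcoMod_mem_Ico Real.two_pi_pos 0 θ
    rw [zero_add] at hmem
    set k := toIcoDiv Real.two_pi_pos 0 θ with hkdef
    have hθeq : θ₀ + k • (2*Real.pi) = θ := toIcoMod_add_toIcoDiv_zsmul Real.two_pi_pos 0 θ
    have hang : (θ : Real.Angle) = (θ₀ : Real.Angle) := by
      rw [Real.Angle.angle_eq_iff_two_pi_dvd_sub]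
      refine ⟨k, ?_⟩
      rw [← hθeq]
      push_cast [zsmul_eq_mul]
      ring
    have hcirceq : circ θ = circ θ₀ := by
      rw [hcirc_def]
      simp only []
      congr 1
      rw [← hθeq]
      push_cast [zsmul_eq_mul]
      rw [add_mul, Complex.exp_add]
      rw [show ((k:ℂ) * (2*Real.pi)) * Complex.I = (k:ℂ) * (2*Real.pi*Complex.I) by ring]
      rw [Complex.exp_int_mul_two_pi_mul_I, mul_one]
    have hcueq : cu θ = cu θ₀ := by simp only [hcu_def]; rw [hcirceq]
    rw [hang, hcirceq, hcueq]
    exact Kico θ₀ hmem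
  have K2 : ∀ w : ℂ, Complex.abs w = r → u w * Complex.exp (A (w.arg : ℝ)) = g w := by
    intro w hw
    have hw0 : w ≠ 0 := by
      intro h; rw [h] at hw; simp at hw; exact absurd hw.symm (ne_of_gt hr0)
    have hcw : circ (w.arg) = w := by
      rw [hcirc_def]
      simp only []
      rw [← hw]
      exact Complex.abs_mul_exp_arg_mul_I w
    have h := K1 w.arg
    simp only [hcu_def] at h
    rwa [hcw] at h

  -- the angular correction as a function on ℂ
  set Δr : ℂ → ℂ := fun z => A ((z.arg : ℝ) : Real.Angle) with hΔr_def
  have hΔr_cont : ∀ z : ℂ, z ≠ 0 → ContinuousAt Δr z := by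
    intro z hz
    exact hAcont.continuousAt.comp (Complex.continuousAt_arg_coe_angle hz)
  -- the radial squashing map
  set μ : ℂ → ℝ := fun z => min (r / Complex.abs z) 1 with hμ_def
  have hμ0 : ∀ z, 0 ≤ μ z := fun z =>
    le_min (div_nonneg hr0.le (Complex.abs.nonneg z)) zero_le_one
  have hμ1 : ∀ z, μ z ≤ 1 := fun z => min_le_right _ _
  have hμr : ∀ z, r ≤ Complex.abs z → μ z = r / Complex.abs z := by
    intro z hz
    exact min_eq_left ((div_le_one (lt_of_lt_of_le hr0 hz)).mpr hz)
  set ν : ℂ → ℂ := fun z => ((μ z : ℝ) : ℂ) * z with hν_def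
  have habs_mul : ∀ (c : ℝ) (z : ℂ), 0 ≤ c → Complex.abs ((c:ℂ) * z) = c * Complex.abs z := by
    intro c z hc
    rw [map_mul, Complex.abs_ofReal, _root_.abs_of_nonneg hc]
  have hν_abs_le : ∀ z, Complex.abs (ν z) ≤ Complex.abs z := by
    intro z
    rw [hν_def]
    simp only []
    rw [habs_mul _ _ (hμ0 z)]
    nlinarith [hμ1 z, Complex.abs.nonneg z, hμ0 z]
  have hν_absr : ∀ z, r ≤ Complex.abs z → Complex.abs (ν z) = r := by
    intro z hz
    have hzpos : 0 < Complex.abs z := lt_of_lt_of_le hr0 hz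
    rw [hν_def]
    simp only []
    rw [habs_mul _ _ (hμ0 z), hμr z hz, div_mul_cancel₀ _ (ne_of_gt hzpos)]
  have hν_mem : ∀ z ∈ unitDisk, ν z ∈ unitDisk := by
    intro z hz
    exact mem_unitDisk.mpr (lt_of_le_of_lt (hν_abs_le z) (mem_unitDisk.mp hz))
  have hν_cont : Continuous ν := by
    rw [continuous_iff_continuousAt]
    intro z
    rcases eq_or_ne z 0 with hz | hz
    · subst hz
      have hν0 : ν 0 = 0 := by simp [hν_def]
      unfold ContinuousAt
      rw [hν0]
      have hb : ∀ w : ℂ, ‖ν w‖ ≤ ‖w‖ := by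
        intro w
        rw [Complex.norm_eq_abs, Complex.norm_eq_abs]
        exact hν_abs_le w
      exact squeeze_zero_norm hb tendsto_norm_zero
    · have habsne : Complex.abs z ≠ 0 := by simpa [Complex.abs.ne_zero_iff] using hz
      refine ContinuousAt.mul ?_ continuousAt_id
      refine Complex.continuous_ofReal.continuousAt.comp ?_
      exact (continuousAt_const.div (Complex.continuous_abs.continuousAt) habsne).min continuousAt_const
  have hν_arg : ∀ z, r ≤ Complex.abs z → Δr (ν z) = Δr z := by
    intro z hz
    have hzpos : 0 < Complex.abs z := lt_of_lt_of_le hr0 hz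
    have : ν z = ((r / Complex.abs z : ℝ) : ℂ) * z := by
      rw [hν_def]; simp only []; rw [hμr z hz]
    rw [hΔr_def]
    simp only []
    rw [this, Complex.arg_real_mul z (div_pos hr0 hzpos)]
  have hν_ne : ∀ z, r ≤ Complex.abs z → ν z ≠ 0 := by
    intro z hz h0
    have := hν_absr z hz
    rw [h0] at this
    simp at this
    exact absurd this.symm (ne_of_gt hr0)

  -- exponent profile for the middle homotopy
  set E : ℝ × ℂ → ℝ :=
    fun p => max 0 (min (2 - (2 - p.1) * (r / max (Complex.abs p.2) (r/2))) p.1) with hE_def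
  have hden_pos : ∀ z : ℂ, 0 < max (Complex.abs z) (r/2) :=
    fun z => lt_max_of_lt_right (by linarith)
  have hE_cont : Continuous E := by
    refine continuous_const.max (Continuous.min ?_ continuous_fst)
    refine continuous_const.sub (Continuous.mul (continuous_const.sub continuous_fst) ?_)
    refine continuous_const.div ((Complex.continuous_abs.comp continuous_snd).max continuous_const)
      (fun p => ne_of_gt (hden_pos p.2))
  have hE0 : ∀ z, E (0, z) = 0 := by
    intro z
    rw [hE_def]
    simp only []
    exact max_eq_left (min_le_right _ _)
  have hE1 : ∀ z, r < Complex.abs z → E (1, z) = 1 := by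
    intro z hz
    rw [hE_def]
    simp only []
    have h1 : max (Complex.abs z) (r/2) = Complex.abs z := max_eq_left (by linarith)
    rw [h1]
    have h2 : r / Complex.abs z ≤ 1 := (div_le_one (by linarith)).mpr hz.le
    have h3 : (1:ℝ) ≤ 2 - (2 - 1) * (r / Complex.abs z) := by nlinarith
    rw [min_eq_right h3]
    exact max_eq_right zero_le_one
  have hE_small : ∀ t : ℝ, t ≤ 1 → ∀ z : ℂ, Complex.abs z < r/2 → E (t, z) = 0 := by
    intro t ht z hz
    rw [hE_def]
    simp only []
    have h1 : max (Complex.abs z) (r/2) = r/2 := max_eq_right hz.le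
    rw [h1]
    have h2 : r / (r/2) = 2 := by field_simp
    rw [h2]
    refine max_eq_left (le_trans (min_le_left _ _) (by nlinarith))
  -- radial profile for the middle homotopy
  set Z : ℝ × ℂ → ℂ :=
    fun p => ((min (r / Complex.abs p.2) (2 / (2 - p.1)) : ℝ) : ℂ) * p.2 with hZ_def
  have hZcoef_nonneg : ∀ p : ℝ × ℂ, p.1 ≤ 1 → 0 ≤ min (r / Complex.abs p.2) (2 / (2 - p.1)) := by
    intro p hp
    exact le_min (div_nonneg hr0.le (Complex.abs.nonneg _)) (div_nonneg (by norm_num) (by linarith))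
  have hZcoef_le2 : ∀ p : ℝ × ℂ, 0 ≤ p.1 → p.1 ≤ 1 →
      min (r / Complex.abs p.2) (2 / (2 - p.1)) ≤ 2 := by
    intro p h0 h1
    refine le_trans (min_le_right _ _) ?_
    rw [div_le_iff₀ (by linarith)]
    linarith
  have hZ_abs_le : ∀ p : ℝ × ℂ, p.1 ≤ 1 → Complex.abs (Z p) ≤ r := by
    intro p hp
    rw [hZ_def]
    simp only []
    rw [habs_mul _ _ (hZcoef_nonneg p hp)]
    rcases eq_or_ne p.2 0 with h | h
    · rw [h]; simp; positivity
    · have habspos : 0 < Complex.abs p.2 := by simpa [Complex.abs.pos_iff] using h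
      calc min (r / Complex.abs p.2) (2 / (2 - p.1)) * Complex.abs p.2
          ≤ (r / Complex.abs p.2) * Complex.abs p.2 :=
            mul_le_mul_of_nonneg_right (min_le_left _ _) habspos.le
        _ = r := div_mul_cancel₀ _ (ne_of_gt habspos)
  have hZ_mem : ∀ p : ℝ × ℂ, p.1 ≤ 1 → Z p ∈ unitDisk :=
    fun p hp => mem_unitDisk.mpr (lt_of_le_of_lt (hZ_abs_le p hp) hr1)
  have hZ_absr : ∀ p : ℝ × ℂ, 0 ≤ p.1 → p.1 ≤ 1 → r ≤ Complex.abs p.2 →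
      Complex.abs (Z p) = r := by
    intro p h0 h1 hr
    have habspos : 0 < Complex.abs p.2 := lt_of_lt_of_le hr0 hr
    have hco : min (r / Complex.abs p.2) (2 / (2 - p.1)) = r / Complex.abs p.2 := by
      refine min_eq_left (le_trans ((div_le_one habspos).mpr hr) ?_)
      rw [le_div_iff₀ (by linarith)]
      linarith
    rw [hZ_def]
    simp only []
    rw [habs_mul _ _ (hZcoef_nonneg p h1), hco, div_mul_cancel₀ _ (ne_of_gt habspos)]
  have hZ0 : ∀ z, Z (0, z) = ν z := by
    intro z
    rw [hZ_def, hν_def, hμ_def]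
    norm_num
  have hZ1 : ∀ z, r ≤ Complex.abs z → Z (1, z) = ν z := by
    intro z hz
    have habspos : 0 < Complex.abs z := lt_of_lt_of_le hr0 hz
    rw [hZ_def, hν_def]
    simp only []
    rw [hμr z hz]
    have h22 : (2:ℝ)/(2-(1:ℝ)) = 2 := by norm_num
    rw [h22]
    rw [min_eq_left (le_trans ((div_le_one habspos).mpr hz) one_le_two)]
  -- continuity of Z on the cylinder
  set s : Set (ℝ × ℂ) := Set.Icc (0:ℝ) 1 ×ˢ unitDisk with hs_def
  have hs_mem : ∀ p : ℝ × ℂ, p ∈ s ↔ (0 ≤ p.1 ∧ p.1 ≤ 1) ∧ Complex.abs p.2 < 1 := by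
    intro p
    rw [hs_def, Set.mem_prod, Set.mem_Icc, mem_unitDisk]
  have hZ_cont : ContinuousOn Z s := by
    intro p hp
    obtain ⟨⟨ht0, ht1⟩, hz1⟩ := (hs_mem p).mp hp
    rcases eq_or_ne p.2 0 with h | h
    · -- squeeze at the origin
      have hZp : Z p = 0 := by rw [hZ_def]; simp only []; rw [h, mul_zero]
      unfold ContinuousWithinAt
      rw [hZp]
      have hbd : ∀ᶠ q in nhdsWithin p s, ‖Z q‖ ≤ 2 * Complex.abs q.2 := by
        filter_upwards [self_mem_nhdsWithin] with q hq
        obtain ⟨⟨hq0, hq1⟩, _⟩ := (hs_mem q).mp hq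
        rw [Complex.norm_eq_abs, hZ_def]
        simp only []
        rw [habs_mul _ _ (hZcoef_nonneg q hq1)]
        exact mul_le_mul_of_nonneg_right (hZcoef_le2 q hq0 hq1) (Complex.abs.nonneg _)
      refine squeeze_zero_norm' hbd ?_
      have : Continuous (fun q : ℝ × ℂ => 2 * Complex.abs q.2) :=
        continuous_const.mul (Complex.continuous_abs.comp continuous_snd)
      have h2 := (this.tendsto p).mono_left (nhdsWithin_le_nhds (s := s))
      rw [h, map_zero, mul_zero] at h2
      exact h2
    · have habsne : Complex.abs p.2 ≠ 0 := by simpa [Complex.abs.ne_zero_iff] using h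
      refine ContinuousAt.continuousWithinAt ?_
      refine ContinuousAt.mul ?_ continuous_snd.continuousAt
      refine Complex.continuous_ofReal.continuousAt.comp ?_
      refine ContinuousAt.inf ?_ ?_
      · exact continuousAt_const.div ((Complex.continuous_abs.comp continuous_snd).continuousAt) habsne
      · exact continuousAt_const.div ((continuous_const.sub continuous_fst).continuousAt)
          (by
          intro hc
          have h3 : p.1 = 2 := by
            have := sub_eq_zero.mp hc
            linarith
          linarith)
  -- the middle homotopy
  set M : ℝ × ℂ → ℂ := fun p => u (Z p) * Complex.exp (((E p : ℝ) : ℂ) * Δr p.2) with hM_def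

  have hM_cont : ContinuousOn M s := by
    have hu1 : ContinuousOn (fun p : ℝ × ℂ => u (Z p)) s :=
      hcont.comp hZ_cont (fun p hp => hZ_mem p ((hs_mem p).mp hp).1.2)
    refine hu1.mul ?_
    intro p hp
    obtain ⟨⟨ht0, ht1⟩, hz1⟩ := (hs_mem p).mp hp
    rcases eq_or_ne p.2 0 with h | h
    · have habs0 : Complex.abs p.2 < r / 2 := by rw [h]; simp only [map_zero]; positivity
      have hval : Complex.exp (((E p : ℝ) : ℂ) * Δr p.2) = 1 := by
        have he : E p = 0 := by
          have := hE_small p.1 ht1 p.2 habs0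
          simpa using this
        rw [he]
        simp
      refine ContinuousWithinAt.congr_of_eventuallyEq
        (continuousWithinAt_const (b := (1:ℂ))) ?_ hval
      have hopen : ∀ᶠ q in nhdsWithin p s, Complex.abs q.2 < r/2 := by
        refine Filter.Eventually.filter_mono (nhdsWithin_le_nhds (s := s)) ?_
        have hOp : IsOpen {q : ℝ × ℂ | Complex.abs q.2 < r/2} :=
          isOpen_lt (Complex.continuous_abs.comp continuous_snd) continuous_const
        exact hOp.eventually_mem habs0
      filter_upwards [hopen, self_mem_nhdsWithin] with q hq1 hq2
      have he : E q = 0 := by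
        have := hE_small q.1 ((hs_mem q).mp hq2).1.2 q.2 hq1
        simpa using this
      rw [he]
      simp
    · refine ContinuousAt.continuousWithinAt ?_
      refine Complex.continuous_exp.continuousAt.comp ?_
      refine ContinuousAt.mul ?_ ?_
      · exact Complex.continuous_ofReal.continuousAt.comp hE_cont.continuousAt
      · exact (hΔr_cont p.2 h).comp continuous_snd.continuousAt
  have hM0 : ∀ z, M (0, z) = u (ν z) := by
    intro z
    rw [hM_def]
    simp only []
    rw [hZ0 z, hE0 z]
    simp
  have hM1 : ∀ z, r < Complex.abs z → M (1, z) = g (ν z) := by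
    intro z hz
    rw [hM_def]
    simp only []
    rw [hZ1 z hz.le, hE1 z hz]
    have h1 : (((1:ℝ):ℂ)) * Δr z = Δr z := by norm_num
    rw [h1, ← hν_arg z hz.le]
    have := K2 (ν z) (hν_absr z hz.le)
    simpa [hΔr_def] using this
  have hM_ne : ∀ p ∈ s, r < Complex.abs p.2 → M p ≠ 0 := by
    intro p hp hrp
    obtain ⟨⟨ht0, ht1⟩, hz1⟩ := (hs_mem p).mp hp
    rw [hM_def]
    simp only []
    refine mul_ne_zero ?_ (Complex.exp_ne_zero _)
    refine hne _ (hZ_mem p ht1) ?_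
    rw [hZ_absr p ht0 ht1 hrp.le]
  -- membership helper for the complement of the compact core
  have hzmem : ∀ z : ℂ, z ∈ unitDisk \ closedBall 0 r → r < Complex.abs z ∧ Complex.abs z < 1 := by
    intro z hz
    constructor
    · have h2 : ¬ (‖z‖ ≤ r) := by simpa [mem_closedBall_zero_iff] using hz.2
      rw [Complex.norm_eq_abs] at h2
      exact not_le.mp h2
    · exact mem_unitDisk.mp hz.1
  -- algebra for the straight-line reparametrizations
  have hcomb : ∀ (t : ℝ) (z : ℂ),
      (1 - (t:ℂ)) * z + (t:ℂ) * ν z = (((1 - t) + t * μ z : ℝ) : ℂ) * z := by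
    intro t z
    rw [hν_def]
    simp only []
    push_cast
    ring
  have hcomb4 : ∀ (t : ℝ) (z : ℂ),
      (1 - (t:ℂ)) * ν z + (t:ℂ) * z = (((1 - t) * μ z + t : ℝ) : ℂ) * z := by
    intro t z
    rw [hν_def]
    simp only []
    push_cast
    ring
  have hμar : ∀ z, r ≤ Complex.abs z → μ z * Complex.abs z = r := by
    intro z hz
    have hzpos : 0 < Complex.abs z := lt_of_lt_of_le hr0 hz
    rw [hμr z hz, div_mul_cancel₀ _ (ne_of_gt hzpos)]
  -- now fix a functional satisfying the axioms
  refine ⟨d, ?_⟩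
  intro I hI
  obtain ⟨hIres, hI1, hI2, hI3, hI4, hI5⟩ := hI
  -- value on power maps
  have hAdmPow : ∀ n : ℕ, Admissible (fun z : ℂ => z ^ n) := by
    intro n
    refine ⟨(continuous_pow n).continuousOn, ?_⟩
    rcases Nat.eq_zero_or_pos n with h | h
    · subst h
      have hempty : {z ∈ unitDisk | z ^ 0 = (0:ℂ)} = ∅ := by
        ext z; simp
      rw [hempty, closure_empty]
      exact Set.empty_subset _
    · have hset : {z ∈ unitDisk | z ^ n = (0:ℂ)} = {0} := by
        ext z
        simp only [Set.mem_setOf_eq, Set.mem_singleton_iff,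
          pow_eq_zero_iff (show n ≠ 0 by omega)]
        constructor
        · rintro ⟨-, h0⟩; exact h0
        · rintro rfl
          exact ⟨mem_unitDisk.mpr (by simp), rfl⟩
      rw [hset, closure_singleton]
      intro z hz
      rw [Set.mem_singleton_iff.mp hz]
      exact mem_unitDisk.mpr (by simp)
  have hIpow : ∀ n : ℕ, I (fun z : ℂ => z ^ n) = n := by
    intro n
    rcases Nat.eq_zero_or_pos n with h | h
    · subst h
      rw [hI1 _ (hAdmPow 0) (fun z _ => by simp)]
      simp
    · have h5 := hI5 (fun z => z ^ n) (hAdmPow n) ((differentiable_pow n).differentiableOn)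
        ({0} : Finset ℂ) ?_ (fun _ => n) ?_
      · rw [h5, Finset.sum_singleton]
      · simp only [Finset.coe_singleton]
        ext z
        simp only [Set.mem_setOf_eq, Set.mem_singleton_iff,
          pow_eq_zero_iff (show n ≠ 0 by omega)]
        constructor
        · rintro rfl
          exact ⟨mem_unitDisk.mpr (by simp), rfl⟩
        · rintro ⟨-, h0⟩; exact h0
      · intro z hz
        rw [Finset.mem_singleton] at hz
        subst hz
        exact ⟨fun _ => 1, analyticAt_const, one_ne_zero,
          Filter.Eventually.of_forall (fun w => by simp)⟩
  -- value on the normal form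
  have hIg : I g = d := by
    rcases le_or_gt 0 d with h | h
    · have hgeq : g = fun z : ℂ => z ^ d.toNat := funext fun z => if_pos h
      rw [hgeq, hIpow]
      omega
    · have hgeq : g = fun z : ℂ => ((starRingEnd ℂ) z) ^ (-d).toNat :=
        funext fun z => if_neg (not_le.mpr h)
      rw [hgeq]
      calc I (fun z : ℂ => ((starRingEnd ℂ) z) ^ (-d).toNat)
          = - I (fun w : ℂ => w ^ (-d).toNat) := hI3 _ (hAdmPow _)
        _ = -(((-d).toNat : ℕ) : ℤ) := by rw [hIpow]
        _ = d := by omega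
  -- homotopy 1 : from u to u ∘ ν
  set H1 : ℝ × ℂ → ℂ := fun p => u ((1 - (p.1:ℂ)) * p.2 + (p.1:ℂ) * ν p.2) with hH1_def
  have hH1inner_mem : ∀ (t : ℝ) (z : ℂ), 0 ≤ t → t ≤ 1 → z ∈ unitDisk →
      ((1 - (t:ℂ)) * z + (t:ℂ) * ν z) ∈ unitDisk := by
    intro t z ht0 ht1 hz
    rw [mem_unitDisk, hcomb t z, habs_mul _ _ (by nlinarith [hμ0 z, hμ1 z])]
    have h1 := mem_unitDisk.mp hz
    have hco : (1 - t) + t * μ z ≤ 1 := by nlinarith [hμ1 z]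
    have := mul_le_of_le_one_left (Complex.abs.nonneg z) hco
    linarith
  have hH1_cont : ContinuousOn H1 s := by
    have c1 : Continuous (fun p : ℝ × ℂ => ((p.1:ℝ):ℂ)) :=
      Complex.continuous_ofReal.comp continuous_fst
    have hinner : Continuous (fun p : ℝ × ℂ => (1 - (p.1:ℂ)) * p.2 + (p.1:ℂ) * ν p.2) :=
      ((continuous_const.sub c1).mul continuous_snd).add (c1.mul (hν_cont.comp continuous_snd))
    exact hcont.comp hinner.continuousOn
      (fun p hp => hH1inner_mem p.1 p.2 ((hs_mem p).mp hp).1.1 ((hs_mem p).mp hp).1.2 hp.2)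
  have hH1_ne : ∀ t ∈ Set.Icc (0:ℝ) 1, ∀ z ∈ unitDisk \ closedBall 0 r, H1 (t, z) ≠ 0 := by
    intro t ht z hz
    obtain ⟨hzr, hz1⟩ := hzmem z hz
    rw [hH1_def]
    simp only []
    refine hne _ (hH1inner_mem t z ht.1 ht.2 hz.1) ?_
    rw [hcomb t z, habs_mul _ _ (by nlinarith [hμ0 z, hμ1 z, ht.1, ht.2])]
    have h2 := hμar z hzr.le
    nlinarith [hμ0 z, hμ1 z, ht.1, ht.2,
      mul_nonneg (sub_nonneg.mpr ht.2) (sub_nonneg.mpr hzr.le)]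
  -- homotopy 3 : straight line from M(1,·) to g ∘ ν
  set H3 : ℝ × ℂ → ℂ := fun p => M (1, p.2) + (p.1:ℂ) * (g (ν p.2) - M (1, p.2)) with hH3_def
  have hM1cont : ContinuousOn (fun z => M (1, z)) unitDisk := by
    have hmap : Set.MapsTo (fun z : ℂ => ((1:ℝ), z)) unitDisk s :=
      fun z hz => (hs_mem _).mpr ⟨⟨zero_le_one, le_refl _⟩, mem_unitDisk.mp hz⟩
    exact hM_cont.comp (Continuous.continuousOn (continuous_const.prodMk continuous_id)) hmap
  have hH3_cont : ContinuousOn H3 s := by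
    have h1 : ContinuousOn (fun p : ℝ × ℂ => M (1, p.2)) s :=
      hM1cont.comp continuous_snd.continuousOn (fun p hp => hp.2)
    have h2 : ContinuousOn (fun p : ℝ × ℂ => g (ν p.2)) s :=
      (((hgcont.comp hν_cont).comp continuous_snd)).continuousOn
    exact h1.add (((Complex.continuous_ofReal.comp continuous_fst).continuousOn).mul (h2.sub h1))
  have hH3_ne : ∀ t ∈ Set.Icc (0:ℝ) 1, ∀ z ∈ unitDisk \ closedBall 0 r, H3 (t, z) ≠ 0 := by
    intro t ht z hz
    obtain ⟨hzr, hz1⟩ := hzmem z hz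
    rw [hH3_def]
    simp only []
    rw [hM1 z hzr]
    simp only [sub_self, mul_zero, add_zero]
    exact hgne _ (hν_ne z hzr.le)
  -- homotopy 4 : from g ∘ ν back to g
  set H4 : ℝ × ℂ → ℂ := fun p => g ((1 - (p.1:ℂ)) * ν p.2 + (p.1:ℂ) * p.2) with hH4_def
  have hH4_cont : ContinuousOn H4 s := by
    have c1 : Continuous (fun p : ℝ × ℂ => ((p.1:ℝ):ℂ)) :=
      Complex.continuous_ofReal.comp continuous_fst
    have hinner : Continuous (fun p : ℝ × ℂ => (1 - (p.1:ℂ)) * ν p.2 + (p.1:ℂ) * p.2) :=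
      ((continuous_const.sub c1).mul (hν_cont.comp continuous_snd)).add (c1.mul continuous_snd)
    exact (hgcont.comp hinner).continuousOn
  have hH4_ne : ∀ t ∈ Set.Icc (0:ℝ) 1, ∀ z ∈ unitDisk \ closedBall 0 r, H4 (t, z) ≠ 0 := by
    intro t ht z hz
    obtain ⟨hzr, hz1⟩ := hzmem z hz
    have hzpos : 0 < Complex.abs z := lt_trans hr0 hzr
    have hμpos : 0 < μ z := by
      rw [hμr z hzr.le]
      positivity
    rw [hH4_def]
    simp only []
    refine hgne _ ?_
    rw [hcomb4 t z]
    have hcoeff : 0 < (1 - t) * μ z + t := by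
      rcases eq_or_lt_of_le ht.1 with h | h
      · rw [← h]
        simpa using hμpos
      · have h1 : 0 ≤ (1 - t) * μ z := mul_nonneg (by linarith [ht.2]) hμpos.le
        linarith
    refine mul_ne_zero (Complex.ofReal_ne_zero.mpr (ne_of_gt hcoeff)) ?_
    intro h0
    rw [h0, map_zero] at hzpos
    exact lt_irrefl 0 hzpos
  -- endpoint identifications
  have E1a : (fun z => H1 (0, z)) = u := by
    funext z
    rw [hH1_def]
    norm_num
  have E1b : (fun z => H1 (1, z)) = fun z => u (ν z) := by
    funext z
    rw [hH1_def]
    norm_num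
  have EM0 : (fun z => M (0, z)) = fun z => u (ν z) := funext hM0
  have EH3a : (fun z => H3 (0, z)) = fun z => M (1, z) := by
    funext z
    rw [hH3_def]
    norm_num
  have EH3b : (fun z => H3 (1, z)) = fun z => g (ν z) := by
    funext z
    rw [hH3_def]
    simp only [Complex.ofReal_one, one_mul]
    ring
  have EH4a : (fun z => H4 (0, z)) = fun z => g (ν z) := by
    funext z
    rw [hH4_def]
    norm_num
  have EH4b : (fun z => H4 (1, z)) = g := by
    funext z
    rw [hH4_def]
    norm_num
  have hKcompact : IsCompact (closedBall (0:ℂ) r) := isCompact_closedBall _ _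
  have hKsub : closedBall (0:ℂ) r ⊆ unitDisk := closedBall_subset_ball hr1
  calc I u = I (fun z => H1 (0, z)) := by rw [E1a]
    _ = I (fun z => H1 (1, z)) :=
        hI2 H1 hH1_cont ⟨closedBall 0 r, hKcompact, hKsub, hH1_ne⟩
    _ = I (fun z => M (0, z)) := by rw [E1b, EM0]
    _ = I (fun z => M (1, z)) :=
        hI2 M hM_cont ⟨closedBall 0 r, hKcompact, hKsub,
          fun t ht z hz => hM_ne (t, z) ((hs_mem _).mpr ⟨⟨ht.1, ht.2⟩, (hzmem z hz).2⟩)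
            (hzmem z hz).1⟩
    _ = I (fun z => H3 (0, z)) := by rw [EH3a]
    _ = I (fun z => H3 (1, z)) :=
        hI2 H3 hH3_cont ⟨closedBall 0 r, hKcompact, hKsub, hH3_ne⟩
    _ = I (fun z => H4 (0, z)) := by rw [EH3b, EH4a]
    _ = I (fun z => H4 (1, z)) :=
        hI2 H4 hH4_cont ⟨closedBall 0 r, hKcompact, hKsub, hH4_ne⟩
    _ = I g := by rw [EH4b]
    _ = d := hIg

/-- Proposition 6.1 of the paper: any two integer-valued functionals on
admissible maps `D → ℂ` satisfying the five axioms of the multiplicity agree. -/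
theorem multiplicity_functional_unique
    (I₁ I₂ : (ℂ → ℂ) → ℤ)
    (h₁ : MultiplicityAxioms I₁) (h₂ : MultiplicityAxioms I₂) :
    ∀ u : ℂ → ℂ, Admissible u → I₁ u = I₂ u := by
  intro u hu
  obtain ⟨d, hd⟩ := key_value u hu
  rw [hd I₁ h₁, hd I₂ h₂]
end
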